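/- Let γ ∈ ℝⁿ be dominant, let v be the longest element of the stabilizer W_γ = {w ∈ Sₙ : w·γ = γ}, let w₀ be the longest element of Sₙ (w₀(k) = n+1−k), let u = w₀v, and let γ* = (−γₙ, −γ_{n−1}, …, −γ₁) (which is dominant). Then: (a) u(i) < u(j) for every (i,j) ∈ Z(γ), and Z(γ*) = {(u(i), u(j)) : (i,j) ∈ Z(γ)}; (b) u(j) < u(i) for every (i,j) ∈ P(γ), and P(γ*) = {(u(j), u(i)) : (i,j) ∈ P(γ)}; (c) for every J ⊆ P(γ), the set J* = {(u(j), u(i)) : (i,j) ∈ P(γ) ∖ J} is a subset of P(γ*), and the map w ↦ w u^{−1} is a bijection from F^{(γ,J)} onto F^{(γ*, J*)}. -/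

import Mathlib

namespace Stmt8

variable {n : ℕ}

/-- The inversion set `R(w) = {(i,j) : i < j, w i > w j}`. -/
def invSet (w : Equiv.Perm (Fin n)) : Set (Fin n × Fin n) :=
  {p | p.1 < p.2 ∧ w p.2 < w p.1}

/-- The length `ℓ(w) = |R(w)|`. -/
def len (w : Equiv.Perm (Fin n)) : ℕ :=
  (Finset.univ.filter fun p : Fin n × Fin n => p.1 < p.2 ∧ w p.2 < w p.1).card

/-- `Z(γ) = {(i,j) : i < j, γ i = γ j}`. -/
def Zset (γ : Fin n → ℝ) : Set (Fin n × Fin n) :=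
  {p | p.1 < p.2 ∧ γ p.1 = γ p.2}

/-- `P(γ) = {(i,j) : i < j, γ j = γ i + 1}`. -/
def Pset (γ : Fin n → ℝ) : Set (Fin n × Fin n) :=
  {p | p.1 < p.2 ∧ γ p.2 = γ p.1 + 1}

/-- `F^{(γ,J)} = {w : R(w) ∩ Z(γ) = ∅, R(w) ∩ P(γ) = J}`. -/
def Fset (γ : Fin n → ℝ) (J : Set (Fin n × Fin n)) : Set (Equiv.Perm (Fin n)) :=
  {w | invSet w ∩ Zset γ = ∅ ∧ invSet w ∩ Pset γ = J}

/-- The stabilizer `W_γ = {w : w·γ = γ}`, where `(w·γ)_k = γ (w⁻¹ k)`. -/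
def stab (γ : Fin n → ℝ) : Set (Equiv.Perm (Fin n)) :=
  {w | ∀ k, γ (w⁻¹ k) = γ k}

lemma len_lt_mul_swap (v : Equiv.Perm (Fin n)) {i j : Fin n} (hij : i < j)
    (hv : v i < v j) : len v < len (v * Equiv.swap i j) := by
  classical
  set t := Equiv.swap i j with htdef
  have tt : ∀ x, t (t x) = x := fun x => Equiv.swap_apply_self i j x
  have tinj : ∀ x y, t x = t y → x = y := fun x y h => t.injective h
  have hw : ∀ x, (v * t) x = v (t x) := fun x => rfl
  set S := Finset.univ.filter fun p : Fin n × Fin n => p.1 < p.2 ∧ v p.2 < v p.1 with hS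
  set T := Finset.univ.filter
      fun p : Fin n × Fin n => p.1 < p.2 ∧ (v * t) p.2 < (v * t) p.1 with hT
  have hijT : (i, j) ∈ T := by
    simp only [hT, Finset.mem_filter, Finset.mem_univ, true_and]
    refine ⟨hij, ?_⟩
    simpa [hw, htdef, Equiv.swap_apply_left, Equiv.swap_apply_right] using hv
  set ψ : Fin n × Fin n → Fin n × Fin n :=
    fun p => if t p.1 < t p.2 then (t p.1, t p.2) else p with hψ
  have hmem : ∀ p : Fin n × Fin n, p ∈ S ↔ p.1 < p.2 ∧ v p.2 < v p.1 := by
    intro p; simp [hS]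
  have hmemT : ∀ p : Fin n × Fin n, p ∈ T ↔ p.1 < p.2 ∧ v (t p.2) < v (t p.1) := by
    intro p; simp [hT, hw]
  have hmaps : ∀ p ∈ S, ψ p ∈ T.erase (i, j) := by
    intro p hp
    rw [hmem] at hp
    obtain ⟨h12, hvp⟩ := hp
    rw [Finset.mem_erase]
    by_cases hc : t p.1 < t p.2
    · have hψp : ψ p = (t p.1, t p.2) := if_pos hc
      rw [hψp]
      constructor
      · intro hcon
        have h1 : t p.1 = i := congrArg Prod.fst hcon
        have h2 : t p.2 = j := congrArg Prod.snd hcon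
        have : p.1 = t i := by rw [← h1, tt]
        have e1 : p.1 = j := by rwa [htdef, Equiv.swap_apply_left] at this
        have : p.2 = t j := by rw [← h2, tt]
        have e2 : p.2 = i := by rwa [htdef, Equiv.swap_apply_right] at this
        rw [e1, e2] at h12
        exact absurd h12 (not_lt.2 hij.le)
      · rw [hmemT]; exact ⟨hc, by rw [tt, tt]; exact hvp⟩
    · have hψp : ψ p = p := if_neg hc
      rw [hψp]
      have hne : t p.2 ≠ t p.1 := fun h => (ne_of_gt h12) (tinj _ _ h)
      have hflip : t p.2 < t p.1 := lt_of_le_of_ne (not_lt.1 hc) hne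
      constructor
      · intro hcon
        have e1 : p.1 = i := congrArg Prod.fst hcon
        have e2 : p.2 = j := congrArg Prod.snd hcon
        rw [e1, e2] at hvp
        exact absurd hv (not_lt.2 hvp.le)
      · rw [hmemT]
        refine ⟨h12, ?_⟩
        -- case bash
        rcases eq_or_ne p.1 i with e1i | n1i
        · rcases eq_or_ne p.2 j with e2j | n2j
          · rw [e1i, e2j, htdef, Equiv.swap_apply_left, Equiv.swap_apply_right]; exact hv
          · have n2i : p.2 ≠ i := ne_of_gt (e1i ▸ h12)
            rw [e1i, htdef, Equiv.swap_apply_left, Equiv.swap_apply_of_ne_of_ne n2i n2j]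
            calc v p.2 < v p.1 := hvp
              _ = v i := by rw [e1i]
              _ < v j := hv
        · rcases eq_or_ne p.1 j with e1j | n1j
          · exfalso
            have n2i : p.2 ≠ i := ne_of_gt (lt_trans hij (e1j ▸ h12))
            have n2j : p.2 ≠ j := ne_of_gt (e1j ▸ h12)
            rw [e1j, htdef, Equiv.swap_apply_right, Equiv.swap_apply_of_ne_of_ne n2i n2j] at hflip
            exact absurd (lt_trans hij (e1j ▸ h12)) (not_lt.2 hflip.le)
          · rcases eq_or_ne p.2 i with e2i | n2i
            · exfalso
              rw [e2i, htdef, Equiv.swap_apply_left, Equiv.swap_apply_of_ne_of_ne n1i n1j] at hflip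
              exact absurd (lt_trans (e2i ▸ h12) hij) (not_lt.2 hflip.le)
            · rcases eq_or_ne p.2 j with e2j | n2j
              · rw [e2j, htdef, Equiv.swap_apply_right, Equiv.swap_apply_of_ne_of_ne n1i n1j]
                calc v i < v j := hv
                  _ = v p.2 := by rw [e2j]
                  _ < v p.1 := hvp
              · exfalso
                rw [htdef, Equiv.swap_apply_of_ne_of_ne n1i n1j,
                  Equiv.swap_apply_of_ne_of_ne n2i n2j] at hflip
                exact absurd h12 (not_lt.2 hflip.le)
  have hinj : Set.InjOn ψ S := by
    intro p hp q hq hpq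
    rw [Finset.mem_coe, hmem] at hp hq
    by_cases hcp : t p.1 < t p.2 <;> by_cases hcq : t q.1 < t q.2
    · have ep : ψ p = (t p.1, t p.2) := if_pos hcp
      have eq' : ψ q = (t q.1, t q.2) := if_pos hcq
      rw [ep, eq'] at hpq
      have h1 := tinj _ _ (congrArg Prod.fst hpq)
      have h2 := tinj _ _ (congrArg Prod.snd hpq)
      exact Prod.ext h1 h2
    · exfalso
      have ep : ψ p = (t p.1, t p.2) := if_pos hcp
      have eq' : ψ q = q := if_neg hcq
      rw [ep, eq'] at hpq
      have h1 : t q.1 = p.1 := by rw [← hpq, tt]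
      have h2 : t q.2 = p.2 := by rw [← hpq, tt]
      rw [h1, h2] at hcq
      exact hcq hp.1
    · exfalso
      have ep : ψ p = p := if_neg hcp
      have eq' : ψ q = (t q.1, t q.2) := if_pos hcq
      rw [ep, eq'] at hpq
      have h1 : t p.1 = q.1 := by rw [hpq, tt]
      have h2 : t p.2 = q.2 := by rw [hpq, tt]
      rw [h1, h2] at hcp
      exact hcp hq.1
    · have ep : ψ p = p := if_neg hcp
      have eq' : ψ q = q := if_neg hcq
      rw [ep, eq'] at hpq
      exact hpq
  have h1 : S.card ≤ (T.erase (i, j)).card := Finset.card_le_card_of_injOn ψ hmaps hinj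
  have h2 : (T.erase (i, j)).card < T.card := Finset.card_erase_lt_of_mem hijT
  have e1 : len v = S.card := rfl
  have e2 : len (v * t) = T.card := rfl
  omega


/-- Key: the longest element of the stabilizer inverts every pair in `Z(γ)`. -/
lemma longest_inverts (γ : Fin n → ℝ) (v : Equiv.Perm (Fin n)) (hv : v ∈ stab γ)
    (hvmax : ∀ x ∈ stab γ, len x ≤ len v)
    {i j : Fin n} (hij : i < j) (hγ : γ i = γ j) : v j < v i := by
  by_contra hcon
  have hne : v i ≠ v j := fun h => (ne_of_lt hij) (v.injective h)
  have hlt : v i < v j := lt_of_le_of_ne (not_lt.1 hcon) hne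
  have hγt : ∀ m, γ (Equiv.swap i j m) = γ m := by
    intro m
    rcases eq_or_ne m i with rfl | hmi
    · rw [Equiv.swap_apply_left, hγ]
    · rcases eq_or_ne m j with rfl | hmj
      · rw [Equiv.swap_apply_right, hγ]
      · rw [Equiv.swap_apply_of_ne_of_ne hmi hmj]
  have hmem : v * Equiv.swap i j ∈ stab γ := by
    intro k
    have : (v * Equiv.swap i j)⁻¹ k = Equiv.swap i j (v⁻¹ k) := by
      rw [mul_inv_rev]
      rfl
    rw [this, hγt, hv k]
  exact absurd (hvmax _ hmem) (not_le.2 (len_lt_mul_swap v hij hlt))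

theorem stmt8 (γ : Fin n → ℝ) (hdom : Monotone γ)
    (v : Equiv.Perm (Fin n)) (hv : v ∈ stab γ)
    (hvmax : ∀ x ∈ stab γ, len x ≤ len v)
    (u : Equiv.Perm (Fin n)) (hu : u = Fin.revPerm * v)
    (γs : Fin n → ℝ) (hγs : ∀ k, γs k = - γ k.rev) :
    ((∀ p ∈ Zset γ, u p.1 < u p.2) ∧
      Zset γs = (fun p : Fin n × Fin n => (u p.1, u p.2)) '' Zset γ) ∧
    ((∀ p ∈ Pset γ, u p.2 < u p.1) ∧
      Pset γs = (fun p : Fin n × Fin n => (u p.2, u p.1)) '' Pset γ) ∧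
    (∀ J ⊆ Pset γ,
      (fun p : Fin n × Fin n => (u p.2, u p.1)) '' (Pset γ \ J) ⊆ Pset γs ∧
      Set.BijOn (fun w => w * u⁻¹) (Fset γ J)
        (Fset γs ((fun p : Fin n × Fin n => (u p.2, u p.1)) '' (Pset γ \ J)))) := by
  -- basic facts
  have huapp : ∀ k, u k = (v k).rev := by
    intro k; rw [hu]; rfl
  have hγv : ∀ k, γ (v k) = γ k := by
    intro k
    have := hv (v k)
    rw [Equiv.Perm.inv_def, Equiv.symm_apply_apply] at this
    exact this.symm
  have hγsu : ∀ k, γs (u k) = - γ k := by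
    intro k
    rw [hγs, huapp, Fin.rev_rev, hγv]
  have hZv : ∀ i j : Fin n, i < j → γ i = γ j → v j < v i :=
    fun i j hij hγij => longest_inverts γ v hv hvmax hij hγij
  have hLv : ∀ i j : Fin n, γ i < γ j → v i < v j := by
    intro i j h
    by_contra hcon
    have : v j ≤ v i := not_lt.1 hcon
    have := hdom this
    rw [hγv, hγv] at this
    exact absurd h (not_lt.2 this)
  have huZ : ∀ i j : Fin n, i < j → γ i = γ j → u i < u j := by
    intro i j hij hγij
    rw [huapp, huapp]
    exact Fin.rev_lt_rev.2 (hZv i j hij hγij)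
  have huL : ∀ i j : Fin n, γ i < γ j → u j < u i := by
    intro i j h
    rw [huapp, huapp]
    exact Fin.rev_lt_rev.2 (hLv i j h)
  -- part (a)
  have haZ : ∀ p ∈ Zset γ, u p.1 < u p.2 := fun p hp => huZ p.1 p.2 hp.1 hp.2
  have haEq : Zset γs = (fun p : Fin n × Fin n => (u p.1, u p.2)) '' Zset γ := by
    ext q
    constructor
    · rintro ⟨hq12, hqγ⟩
      refine ⟨(u.symm q.1, u.symm q.2), ⟨?_, ?_⟩, ?_⟩
      · -- u.symm q.1 < u.symm q.2
        set p1 := u.symm q.1; set p2 := u.symm q.2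
        have e1 : u p1 = q.1 := u.apply_symm_apply q.1
        have e2 : u p2 = q.2 := u.apply_symm_apply q.2
        have hγp : γ p1 = γ p2 := by
          have a1 : γs (u p1) = - γ p1 := hγsu p1
          have a2 : γs (u p2) = - γ p2 := hγsu p2
          rw [e1] at a1; rw [e2] at a2
          linarith
        have hne : p1 ≠ p2 := fun h => (ne_of_lt hq12) (by rw [← e1, ← e2, h])
        rcases lt_or_gt_of_ne hne with h | h
        · exact h
        · exfalso
          have := huZ p2 p1 h hγp.symm
          rw [e1, e2] at this
          exact absurd hq12 (not_lt.2 this.le)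
      · -- γ equality
        have a1 : γs q.1 = - γ (u.symm q.1) := by
          have := hγsu (u.symm q.1); rwa [u.apply_symm_apply] at this
        have a2 : γs q.2 = - γ (u.symm q.2) := by
          have := hγsu (u.symm q.2); rwa [u.apply_symm_apply] at this
        have := hqγ
        rw [a1, a2] at this
        linarith
      · simp
    · rintro ⟨p, ⟨hp12, hpγ⟩, rfl⟩
      exact ⟨huZ p.1 p.2 hp12 hpγ, by rw [hγsu, hγsu, hpγ]⟩
  -- part (b)
  have hbP : ∀ p ∈ Pset γ, u p.2 < u p.1 := by
    rintro p ⟨hp12, hpγ⟩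
    exact huL p.1 p.2 (by rw [hpγ]; linarith)
  have hbEq : Pset γs = (fun p : Fin n × Fin n => (u p.2, u p.1)) '' Pset γ := by
    ext q
    constructor
    · rintro ⟨hq12, hqγ⟩
      refine ⟨(u.symm q.2, u.symm q.1), ⟨?_, ?_⟩, ?_⟩
      · -- u.symm q.2 < u.symm q.1
        have a1 : γs q.1 = - γ (u.symm q.1) := by
          have := hγsu (u.symm q.1); rwa [u.apply_symm_apply] at this
        have a2 : γs q.2 = - γ (u.symm q.2) := by
          have := hγsu (u.symm q.2); rwa [u.apply_symm_apply] at this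
        have hγp : γ (u.symm q.2) < γ (u.symm q.1) := by
          rw [a1, a2] at hqγ; linarith
        by_contra hcon
        have : u.symm q.1 ≤ u.symm q.2 := not_lt.1 hcon
        have := hdom this
        exact absurd hγp (not_lt.2 this)
      · have a1 : γs q.1 = - γ (u.symm q.1) := by
          have := hγsu (u.symm q.1); rwa [u.apply_symm_apply] at this
        have a2 : γs q.2 = - γ (u.symm q.2) := by
          have := hγsu (u.symm q.2); rwa [u.apply_symm_apply] at this
        rw [a1, a2] at hqγ; linarith
      · simp
    · rintro ⟨p, ⟨hp12, hpγ⟩, rfl⟩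
      refine ⟨hbP p ⟨hp12, hpγ⟩, ?_⟩
      rw [hγsu, hγsu, hpγ]; ring
  -- part (c)
  refine ⟨⟨haZ, haEq⟩, ⟨hbP, hbEq⟩, ?_⟩
  intro J hJ
  have hc1 : (fun p : Fin n × Fin n => (u p.2, u p.1)) '' (Pset γ \ J) ⊆ Pset γs := by
    rw [hbEq]
    exact Set.image_mono (Set.diff_subset)
  refine ⟨hc1, ?_⟩
  have hwu : ∀ (w : Equiv.Perm (Fin n)) (x : Fin n), (w * u⁻¹) (u x) = w x := by
    intro w x
    simp [Equiv.Perm.mul_apply]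
  have hΦinj : Function.Injective (fun p : Fin n × Fin n => (u p.2, u p.1)) := by
    intro p q h
    simp only [Prod.mk.injEq] at h
    exact Prod.ext (u.injective h.2) (u.injective h.1)
  have claim1 : ∀ w : Equiv.Perm (Fin n),
      invSet (w * u⁻¹) ∩ Zset γs = ∅ ↔ invSet w ∩ Zset γ = ∅ := by
    intro w
    rw [Set.eq_empty_iff_forall_notMem, Set.eq_empty_iff_forall_notMem]
    constructor
    · rintro h p ⟨hpi, hpz⟩
      refine h (u p.1, u p.2) ⟨⟨haZ p hpz, ?_⟩, ?_⟩
      · show (w * u⁻¹) (u p.2) < (w * u⁻¹) (u p.1)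
        rw [hwu, hwu]; exact hpi.2
      · rw [haEq]; exact ⟨p, hpz, rfl⟩
    · rintro h q ⟨hqi, hqz⟩
      rw [haEq] at hqz
      obtain ⟨p, hpz, hq⟩ := hqz
      simp only at hq
      subst hq
      refine h p ⟨⟨hpz.1, ?_⟩, hpz⟩
      have h2 : (w * u⁻¹) (u p.2) < (w * u⁻¹) (u p.1) := hqi.2
      rwa [hwu, hwu] at h2
  have claim2 : ∀ w : Equiv.Perm (Fin n),
      invSet (w * u⁻¹) ∩ Pset γs
        = (fun p : Fin n × Fin n => (u p.2, u p.1)) '' (Pset γ \ (invSet w ∩ Pset γ)) := by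
    intro w
    ext q
    constructor
    · rintro ⟨hqi, hqp⟩
      rw [hbEq] at hqp
      obtain ⟨p, hp, hq⟩ := hqp
      simp only at hq
      subst hq
      refine ⟨p, ⟨hp, ?_⟩, rfl⟩
      rintro ⟨hpi, -⟩
      have h2 : (w * u⁻¹) (u p.1) < (w * u⁻¹) (u p.2) := hqi.2
      rw [hwu, hwu] at h2
      exact absurd hpi.2 (not_lt.2 h2.le)
    · rintro ⟨p, ⟨hp, hpn⟩, hq⟩
      simp only at hq
      subst hq
      have hpni : p ∉ invSet w := fun hc => hpn ⟨hc, hp⟩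
      have hne : w p.1 ≠ w p.2 := fun h => (ne_of_lt hp.1) (w.injective h)
      have hlt : w p.1 < w p.2 := by
        rcases lt_or_gt_of_ne hne with h | h
        · exact h
        · exact absurd ⟨hp.1, h⟩ hpni
      constructor
      · refine ⟨hbP p hp, ?_⟩
        show (w * u⁻¹) (u p.1) < (w * u⁻¹) (u p.2)
        rw [hwu, hwu]; exact hlt
      · rw [hbEq]; exact ⟨p, hp, rfl⟩
  refine ⟨?_, ?_, ?_⟩
  · intro w hw
    refine ⟨(claim1 w).2 hw.1, ?_⟩
    show invSet (w * u⁻¹) ∩ Pset γs = _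
    rw [claim2 w, hw.2]
  · exact (mul_left_injective u⁻¹).injOn
  · intro w' hw'
    have e : (w' * u) * u⁻¹ = w' := by group
    refine ⟨w' * u, ⟨?_, ?_⟩, e⟩
    · have h1 : invSet w' ∩ Zset γs = ∅ := hw'.1
      rw [← e] at h1
      exact (claim1 (w' * u)).1 h1
    · have h2 : invSet w' ∩ Pset γs
          = (fun p : Fin n × Fin n => (u p.2, u p.1)) '' (Pset γ \ J) := hw'.2
      rw [← e, claim2 (w' * u)] at h2
      have hsets : Pset γ \ (invSet (w' * u) ∩ Pset γ) = Pset γ \ J :=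
        Set.image_injective.2 hΦinj h2
      have hA : invSet (w' * u) ∩ Pset γ ⊆ Pset γ := Set.inter_subset_right
      calc invSet (w' * u) ∩ Pset γ
          = Pset γ \ (Pset γ \ (invSet (w' * u) ∩ Pset γ)) :=
            (Set.diff_diff_cancel_left hA).symm
        _ = Pset γ \ (Pset γ \ J) := by rw [hsets]
        _ = J := Set.diff_diff_cancel_left hJ

end Stmt8
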